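/- Fix τ = x + iy with y > 0. The matrix-valued function of s given by F(s) = (s−2) · π^{1/2} · y^{1−s} · (Γ(s−1/2)·ζ(2s−3))/(Γ(s)·ζ(2s−2)) · [[1,0],[−τ,1]] · [[1, −iy],[iy, ((2s−2)/(2s−3))·y²]] · [[1, −conj(τ)],[0,1]] tends, as s → 2 with s ≠ 2, to (3/(2πy)) · [[1, −x],[−x, x²+y²]]. -/

import Mathlib

open Matrix Complex Topology Filter

noncomputable section

/-- the residue computation at `s = 2` of the constant term of the
Eisenstein metric for the inclusion representation of `SL(2,ℤ)`:
`(s−2) · √π · y^{1−s} · Γ(s−1/2)ζ(2s−3)/(Γ(s)ζ(2s−2)) ·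
  [[1,0],[−τ,1]]·[[1,−iy],[iy,((2s−2)/(2s−3))y²]]·[[1,−τ̄],[0,1]]`
tends to `(3/(2πy))·[[1,−x],[−x,x²+y²]]` as `s → 2`, `s ≠ 2`. -/
theorem eisenstein_constant_term_residue (x y : ℝ) (hy : 0 < y) :
    Tendsto
      (fun s : ℂ =>
        ((s - 2) * (Real.sqrt Real.pi : ℂ) * (y : ℂ) ^ (1 - s) *
            (Complex.Gamma (s - 1 / 2) * riemannZeta (2 * s - 3)) /
            (Complex.Gamma s * riemannZeta (2 * s - 2))) •
          (!![1, 0; -((x : ℂ) + y * I), 1] *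
            !![1, -(I * y); I * y, ((2 * s - 2) / (2 * s - 3)) * (y : ℂ) ^ 2] *
            !![1, -(starRingEnd ℂ ((x : ℂ) + y * I)); 0, 1]))
      (𝓝[≠] (2 : ℂ))
      (𝓝 (((3 / (2 * Real.pi * y) : ℝ) : ℂ) •
        !![1, -(x : ℂ); -(x : ℂ), (x : ℂ) ^ 2 + (y : ℂ) ^ 2])) := by
  have hy0 : (y : ℂ) ≠ 0 := ofReal_ne_zero.2 hy.ne'
  have hπ0 : Real.pi ≠ 0 := Real.pi_ne_zero
  -- abbreviations
  set C1 : Matrix (Fin 2) (Fin 2) ℂ := !![1, 0; -((x : ℂ) + y * I), 1] with hC1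
  set C2 : Matrix (Fin 2) (Fin 2) ℂ := !![1, -(starRingEnd ℂ ((x : ℂ) + y * I)); 0, 1] with hC2
  set B0 : Matrix (Fin 2) (Fin 2) ℂ := !![1, -(I * y); I * (y:ℂ), 0] with hB0
  set E : Matrix (Fin 2) (Fin 2) ℂ := !![0, 0; 0, 1] with hE
  set M0 : Matrix (Fin 2) (Fin 2) ℂ := C1 * B0 * C2 with hM0
  set M1 : Matrix (Fin 2) (Fin 2) ℂ := C1 * E * C2 with hM1
  set φ : ℂ → ℂ := fun s =>
    (s - 2) * (Real.sqrt Real.pi : ℂ) * (y : ℂ) ^ (1 - s) *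
      (Complex.Gamma (s - 1 / 2) * riemannZeta (2 * s - 3)) /
      (Complex.Gamma s * riemannZeta (2 * s - 2)) with hφdef
  set k : ℂ → ℂ := fun s => ((2 * s - 2) / (2 * s - 3)) * (y : ℂ) ^ 2 with hkdef
  set c : ℂ := ((3 / (2 * Real.pi * y) : ℝ) : ℂ) with hc
  -- rewrite the middle matrix
  have hmid : ∀ s : ℂ, !![1, -(I * (y:ℂ)); I * y, k s] = B0 + k s • E := by
    intro s
    ext i j
    fin_cases i <;> fin_cases j <;> simp [hB0, hE]
  have key : ∀ s : ℂ, (φ s) • (C1 * !![1, -(I * (y:ℂ)); I * y, k s] * C2)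
      = φ s • M0 + (φ s * k s) • M1 := by
    intro s
    rw [hmid, Matrix.mul_add, Matrix.add_mul, Matrix.mul_smul, Matrix.smul_mul,
      smul_add, smul_smul]
  -- scalar limit
  have hmap : Tendsto (fun s : ℂ => 2 * s - 3) (𝓝[≠] (2:ℂ)) (𝓝[≠] (1:ℂ)) := by
    refine tendsto_nhdsWithin_of_tendsto_nhds_of_eventually_within _ ?_ ?_
    · refine Tendsto.mono_left ?_ nhdsWithin_le_nhds
      have hcont : Continuous fun s : ℂ => 2 * s - 3 := by continuity
      have := hcont.tendsto 2
      norm_num at this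
      exact this
    · filter_upwards [self_mem_nhdsWithin] with s hs
      simp only [Set.mem_compl_iff, Set.mem_singleton_iff] at hs ⊢
      intro h; exact hs (by linear_combination h / 2)
  have hres : Tendsto (fun s : ℂ => (2 * s - 4) * riemannZeta (2 * s - 3)) (𝓝[≠] (2:ℂ)) (𝓝 1) := by
    have := riemannZeta_residue_one.comp hmap
    refine this.congr fun s => ?_
    simp only [Function.comp_apply]
    ring_nf
  set g : ℂ → ℂ := fun s =>
    (Real.sqrt Real.pi : ℂ) * (y : ℂ) ^ (1 - s) * Complex.Gamma (s - 1 / 2) /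
      (2 * (Complex.Gamma s * riemannZeta (2 * s - 2))) with hgdef
  have hΓ2 : Complex.Gamma 2 = 1 := by
    have := Complex.Gamma_add_one (s := 1) one_ne_zero
    norm_num [Complex.Gamma_one] at this
    convert this using 2 <;> norm_num
  have h22 : (2 * (2:ℂ) - 2) = 2 := by norm_num
  have hζ2 : riemannZeta (2 * (2:ℂ) - 2) = (Real.pi : ℂ) ^ 2 / 6 := by
    rw [h22, riemannZeta_two]
  have hζ2ne : riemannZeta (2 * (2:ℂ) - 2) ≠ 0 := by
    rw [hζ2]
    exact div_ne_zero (pow_ne_zero _ (by exact_mod_cast hπ0)) (by norm_num)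
  have h32 : ∀ m : ℕ, (2:ℂ) - 1/2 ≠ -m := by
    intro m h
    have := congrArg Complex.re h
    simp at this
    linarith [this, (m.cast_nonneg : (0:ℝ) ≤ m)]
  have h2m : ∀ m : ℕ, (2:ℂ) ≠ -m := by
    intro m h
    have := congrArg Complex.re h
    simp at this
    linarith [this, (m.cast_nonneg : (0:ℝ) ≤ m)]
  have hsub : ContinuousAt (fun s : ℂ => s - 1/2) 2 := continuousAt_id.sub continuousAt_const
  have hG32 : ContinuousAt (fun s : ℂ => Complex.Gamma (s - 1/2)) 2 :=
    ContinuousAt.comp (g := Complex.Gamma) (f := fun s : ℂ => s - 1/2) (x := 2)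
      ((Complex.differentiableAt_Gamma _ h32).continuousAt) hsub
  have hcpowc : ContinuousAt (fun s : ℂ => (y : ℂ) ^ (1 - s)) 2 :=
    (continuousAt_const_cpow hy0).comp (continuousAt_const.sub continuousAt_id)
  have haff : ContinuousAt (fun s : ℂ => 2 * s - 2) 2 :=
    (continuousAt_const.mul continuousAt_id).sub continuousAt_const
  have hzc : ContinuousAt (fun s : ℂ => riemannZeta (2 * s - 2)) 2 :=
    ContinuousAt.comp (g := riemannZeta) (f := fun s : ℂ => 2 * s - 2) (x := 2)
      ((differentiableAt_riemannZeta (s := 2 * (2:ℂ) - 2) (by rw [h22]; norm_num)).continuousAt) haff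
  have hgc : ContinuousAt g 2 := by
    apply ContinuousAt.div
    · exact (continuousAt_const.mul hcpowc).mul hG32
    · exact continuousAt_const.mul
        (((Complex.differentiableAt_Gamma _ h2m).continuousAt).mul hzc)
    · rw [hΓ2]
      simpa using hζ2ne
  have hsplit : ∀ s : ℂ, φ s = (2 * s - 4) * riemannZeta (2 * s - 3) * g s := by
    intro s
    simp only [hφdef, hgdef]
    ring
  have hg2 : g 2 = c := by
    have hΓ32 : Complex.Gamma ((2:ℂ) - 1/2) = (1/2 : ℂ) * (Real.sqrt Real.pi : ℂ) := by
      have h12 : ((2:ℂ) - 1/2) = 1/2 + 1 := by norm_num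
      rw [h12, Complex.Gamma_add_one (s := 1/2) (by norm_num), Complex.Gamma_one_half_eq]
      congr 1
      rw [Real.sqrt_eq_rpow, Complex.ofReal_cpow Real.pi_pos.le]
      norm_num
    have hcpow : (y : ℂ) ^ (1 - (2:ℂ)) = (y : ℂ)⁻¹ := by
      norm_num
      simp [Complex.cpow_neg_one]
    simp only [hgdef, hc]
    rw [hcpow, hΓ32, hΓ2, hζ2]
    have hsq : ((Real.sqrt Real.pi : ℝ) : ℂ) * ((Real.sqrt Real.pi : ℝ) : ℂ) = (Real.pi : ℂ) := by
      rw [← Complex.ofReal_mul, Real.mul_self_sqrt Real.pi_pos.le]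
    have hπc : (Real.pi : ℂ) ≠ 0 := ofReal_ne_zero.2 hπ0
    push_cast
    field_simp
    linear_combination (6:ℂ) * hsq
  have hφlim : Tendsto φ (𝓝[≠] (2:ℂ)) (𝓝 c) := by
    have := hres.mul (hgc.continuousWithinAt (s := {(2:ℂ)}ᶜ))
    rw [one_mul, hg2] at this
    exact this.congr fun s => (hsplit s).symm
  -- k limit
  have hk : Tendsto k (𝓝[≠] (2:ℂ)) (𝓝 (2 * (y:ℂ)^2)) := by
    have hck : ContinuousAt k 2 := by
      refine ContinuousAt.mul (ContinuousAt.div ?_ ?_ (by norm_num)) continuousAt_const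
      · exact (continuousAt_const.mul continuousAt_id).sub continuousAt_const
      · exact (continuousAt_const.mul continuousAt_id).sub continuousAt_const
    have : k 2 = 2 * (y:ℂ)^2 := by simp only [hkdef]; norm_num
    rw [← this]
    exact hck.continuousWithinAt
  -- combine
  have hT : Tendsto (fun s : ℂ => φ s • M0 + (φ s * k s) • M1) (𝓝[≠] (2:ℂ))
      (𝓝 (c • M0 + (c * (2 * (y:ℂ)^2)) • M1)) :=
    (hφlim.smul_const M0).add ((hφlim.mul hk).smul_const M1)
  have hMtarget : c • M0 + (c * (2 * (y:ℂ)^2)) • M1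
      = c • !![1, -(x : ℂ); -(x : ℂ), (x : ℂ) ^ 2 + (y : ℂ) ^ 2] := by
    rw [mul_smul, ← smul_add]
    congr 1
    simp only [hM0, hM1, hC1, hC2, hB0, hE]
    ext i j
    fin_cases i <;> fin_cases j <;>
      simp [Matrix.mul_apply, Fin.sum_univ_two, Complex.ext_iff, ← Complex.ofReal_pow] <;> ring
  rw [← hMtarget]
  exact hT.congr fun s => (key s).symm

end
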